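/- Fix τ ∈ (0,1). Let γ₁, γ₂ ∈ [1+τ, 1/τ] satisfy 1/γ₁ + 1/γ₂ ≤ 1 − τ, and set α := γ₁/γ₂. For s > 0 let f₁(s) be the unique positive solution of sγ₁f² + (1+α−γ₁+s)f − 1 = 0, and define f̃₁(s) := s·f₁(s), f̃₁(0) := 1 − 1/γ₁ − 1/γ₂. Then there exist constants c, C > 0 depending only on τ such that for all 0 < s < c: (i) |f̃₁(s) − f̃₁(0)| ≤ Cs; and (ii) with f₂(s) := f₁(s)²(1+γ₁f₁(s))²/((1+γ₁f₁(s))² − γ₁f₁(s)²) and f₃(s) := α/(1+γ₁f₁(s)) + s, the quantity (1 − 2f₁(s)f₃(s) + f₂(s)f₃(s)²)/(1 − γ₁f₂(s)(f₃(s)−s)/(1+γ₁f₁(s))) differs from (1/γ₁)(1 − 1/γ₁)/(1 − 1/γ₁ − 1/γ₂) by at most Cs. -/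

import Mathlib

set_option maxHeartbeats 2000000 in
/-- Deterministic small-penalty estimates: the ridge quantities
`s·f₁(s)` and the limiting shift-bias coefficient converge at rate `O(s)` to their
ridgeless limits `1 − 1/γ₁ − 1/γ₂` and `(1/γ₁)(1−1/γ₁)/(1−1/γ₁−1/γ₂)`, with constants
depending only on `τ`. -/
theorem model_shift_small_penalty_closeness
    (τ : ℝ) (hτ : τ ∈ Set.Ioo (0 : ℝ) 1) :
    ∃ c C : ℝ, 0 < c ∧ 0 < C ∧
      ∀ γ₁ γ₂ : ℝ,
        γ₁ ∈ Set.Icc (1 + τ) (1 / τ) → γ₂ ∈ Set.Icc (1 + τ) (1 / τ) →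
        1 / γ₁ + 1 / γ₂ ≤ 1 - τ →
        ∀ f1 : ℝ → ℝ,
          (∀ s : ℝ, 0 < s → 0 < f1 s ∧
            s * γ₁ * (f1 s) ^ 2 + (1 + γ₁ / γ₂ - γ₁ + s) * f1 s - 1 = 0) →
          ∀ s : ℝ, 0 < s → s < c →
            (|s * f1 s - (1 - 1 / γ₁ - 1 / γ₂)| ≤ C * s) ∧
            ∀ f2 f3 : ℝ,
              f2 = (f1 s) ^ 2 * (1 + γ₁ * f1 s) ^ 2
                / ((1 + γ₁ * f1 s) ^ 2 - γ₁ * (f1 s) ^ 2) →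
              f3 = (γ₁ / γ₂) / (1 + γ₁ * f1 s) + s →
              |(1 - 2 * f1 s * f3 + f2 * f3 ^ 2)
                  / (1 - γ₁ * f2 * (f3 - s) / (1 + γ₁ * f1 s))
                - (1 / γ₁) * (1 - 1 / γ₁) / (1 - 1 / γ₁ - 1 / γ₂)| ≤ C * s := by
  obtain ⟨hτ0, hτ1⟩ := hτ
  refine ⟨τ/2, 10/τ^5, by positivity, by positivity, ?_⟩
  intro γ₁ γ₂ hγ₁ hγ₂ hsum f1 hf1 s hs hsc
  obtain ⟨hγ₁l, hγ₁u⟩ := hγ₁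
  obtain ⟨hγ₂l, hγ₂u⟩ := hγ₂
  have hγ₁0 : (0:ℝ) < γ₁ := by linarith
  have hγ₂0 : (0:ℝ) < γ₂ := by linarith
  have hγ₁1 : (1:ℝ) < γ₁ := by linarith
  have hτγ₁ : τ * γ₁ ≤ 1 := by
    have := (le_div_iff₀ hτ0).mp hγ₁u; linarith
  obtain ⟨hfpos, heq⟩ := hf1 s hs
  clear hf1
  set f := f1 s with hf
  set a := γ₁ / γ₂ with ha
  set b := γ₁ - 1 - γ₁ / γ₂ with hb
  have ha0 : 0 < a := by rw [ha]; positivity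
  have hL1 : 1 - 1 / γ₁ - 1 / γ₂ = b / γ₁ := by
    rw [hb, eq_div_iff (ne_of_gt hγ₁0)]; field_simp
  have hτsum : τ ≤ 1 - 1/γ₁ - 1/γ₂ := by linarith
  have hbτ : τ * γ₁ ≤ b := by
    rw [hL1] at hτsum
    have := (le_div_iff₀ hγ₁0).mp hτsum; linarith
  have hbτ' : τ ≤ b := by nlinarith
  have hb0 : 0 < b := by linarith
  have hbγ : b < γ₁ := by rw [hb]; nlinarith [ha0, ha]
  have hτb : τ * b ≤ 1 := by nlinarith
  set g := γ₁ * f with hg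
  set u := s * f with hu
  have hg0 : 0 < g := by rw [hg]; positivity
  have hu0 : 0 < u := by rw [hu]; positivity
  clear_value f a b g u
  clear hsum hτsum hγ₂l hγ₂u
  have key : s * g^2 + (s - b) * g - γ₁ = 0 := by
    rw [hg, hb]; linear_combination γ₁ * heq - γ₁ * f * ha
  have ukey : γ₁ * u^2 + (s - b) * u - s = 0 := by
    rw [hu, hb]; linear_combination s * heq - s * f * ha
  have hu1 : u < 1 := by
    by_contra h
    push_neg at h
    have p1 : 0 ≤ γ₁ * u * (u - 1) := by
      apply mul_nonneg (by positivity); linarith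
    have p2 : 0 ≤ s * (u - 1) := by
      apply mul_nonneg hs.le; linarith
    have p3 : 0 ≤ (γ₁ - b) * (u - 1) := by
      apply mul_nonneg (by linarith); linarith
    nlinarith [ukey]
  have hgb : b < γ₁ * u := by
    by_contra h
    push_neg at h
    have p1 : γ₁ * u * u ≤ b * u := mul_le_mul_of_nonneg_right h hu0.le
    have p2 : s * (u - 1) < 0 := mul_neg_of_pos_of_neg hs (by linarith)
    nlinarith [ukey]
  have e1 : u * (γ₁ * u - b) = s * (1 - u) := by linear_combination ukey
  have hub2 : b * (γ₁ * u - b) ≤ γ₁ * s := by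
    have p1 : b * (γ₁ * u - b) ≤ γ₁ * u * (γ₁ * u - b) :=
      mul_le_mul_of_nonneg_right hgb.le (by linarith)
    have p2 : γ₁ * (u * (γ₁ * u - b)) = γ₁ * (s * (1 - u)) := by rw [e1]
    nlinarith [mul_pos (mul_pos hγ₁0 hs) hu0]
  have hsg : b ≤ s * g := by
    have hh : s * g = γ₁ * u := by rw [hg, hu]; ring
    rw [hh]; linarith
  have hg2 : 2 ≤ g := by
    have h1 : s * g < (τ/2) * g := mul_lt_mul_of_pos_right hsc hg0
    nlinarith
  constructor
  · -- part (i)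
    rw [hL1]
    have h0 : 0 ≤ u - b / γ₁ := by
      rw [sub_nonneg, div_le_iff₀ hγ₁0]; nlinarith
    rw [abs_of_nonneg h0]
    have h2 : (γ₁ * u - b) ≤ γ₁ * s / b := by
      rw [le_div_iff₀ hb0]; nlinarith
    have h3 : u - b / γ₁ = (γ₁ * u - b) / γ₁ := by field_simp
    have h4 : (γ₁ * u - b) / γ₁ ≤ γ₁ * u - b :=
      div_le_self (by linarith) (by linarith)
    have h5 : γ₁ * s / b ≤ s / τ^2 := by
      rw [div_le_div_iff₀ hb0 (by positivity)]
      nlinarith [mul_le_mul_of_nonneg_right hτγ₁ hs.le]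
    have h6 : s / τ^2 ≤ 10 / τ^5 * s := by
      rw [show (10:ℝ) / τ^5 * s = 10 * s / τ^5 by ring,
        div_le_div_iff₀ (by positivity) (by positivity)]
      have hp3 : τ^3 ≤ 1 := pow_le_one₀ hτ0.le hτ1.le
      nlinarith [mul_le_mul_of_nonneg_left hp3 (mul_nonneg hs.le (pow_nonneg hτ0.le 2)), hs.le]
    linarith
  · -- part (ii)
    intro f2 f3 hf2 hf3
    have hg1 : (0:ℝ) < 1 + g := by linarith
    have hQ : (0:ℝ) < (γ₁-1)*g^2 + 2*γ₁*g + γ₁ := by nlinarith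
    have hQf : (1+g)^2 - γ₁*f^2 = ((γ₁-1)*g^2 + 2*γ₁*g + γ₁)/γ₁ := by
      rw [hg]; field_simp; ring
    have hB : (0:ℝ) < b*g^2 + 2*γ₁*g + γ₁ := by positivity
    have hs_eq : s = (b*g + γ₁)/(g*(1+g)) := by
      rw [eq_div_iff (by positivity)]; linear_combination key
    have ha' : a = γ₁ - 1 - b := by rw [ha, hb]; ring
    have hffr : f = g/γ₁ := by rw [hg]; field_simp
    have hf3v : f3 = ((γ₁-1)*g + γ₁)/(g*(1+g)) := by
      rw [hf3, ha', hs_eq]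
      field_simp
      ring
    have hN : 1 - 2*f*f3 + f2*f3^2
        = g^2*((γ₁-1)*g + γ₁+1) / (γ₁*((γ₁-1)*g^2+2*γ₁*g+γ₁)*(1+g)) := by
      rw [hf2, hf3v, hQf, hffr]
      have hQ' : (γ₁-1)*g^2 + 2*γ₁*g + γ₁ ≠ 0 := hQ.ne'
      generalize hQd : (γ₁-1)*g^2 + 2*γ₁*g + γ₁ = Q at hQ' ⊢
      field_simp
      subst hQd
      ring
    have hD : 1 - γ₁*f2*(f3-s)/(1+g)
        = (b*g^2+2*γ₁*g+γ₁)/((γ₁-1)*g^2+2*γ₁*g+γ₁) := by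
      rw [hf2, hf3, hQf, ha', hffr]
      have hQ' : (γ₁-1)*g^2 + 2*γ₁*g + γ₁ ≠ 0 := hQ.ne'
      generalize hQd : (γ₁-1)*g^2 + 2*γ₁*g + γ₁ = Q at hQ' ⊢
      field_simp
      subst hQd
      ring
    have hX : (1 - 2*f*f3 + f2*f3^2) / (1 - γ₁*f2*(f3-s)/(1+g))
        = g^2*((γ₁-1)*g+γ₁+1)/(γ₁*(1+g)*(b*g^2+2*γ₁*g+γ₁)) := by
      rw [hN, hD, div_div_div_eq, div_eq_div_iff (by positivity) (by positivity)]
      ring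
    have hL2 : (1/γ₁)*(1-1/γ₁)/(1-1/γ₁-1/γ₂) = (γ₁-1)/(γ₁*b) := by
      rw [hL1, div_eq_div_iff (by positivity) (by positivity)]
      field_simp
    rw [hX, hL2]
    have hdiff : g^2*((γ₁-1)*g+γ₁+1)/(γ₁*(1+g)*(b*g^2+2*γ₁*g+γ₁)) - (γ₁-1)/(γ₁*b)
        = (2*(b-γ₁^2+γ₁)*g^2 - 3*γ₁*(γ₁-1)*g - γ₁*(γ₁-1))
          / (γ₁*b*(1+g)*(b*g^2+2*γ₁*g+γ₁)) := by
      rw [div_sub_div _ _ (by positivity) (by positivity),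
        div_eq_div_iff (by positivity) (by positivity)]
      ring
    rw [hdiff]
    clear hdiff hX hL2 hN hD hf3v hf2 hf3 hs_eq hQf heq key ukey e1 hub2 hL1 ha' hffr
    clear hgb hu1 hu0 hu hfpos hf
    have hDen : (0:ℝ) < γ₁*b*(1+g)*(b*g^2+2*γ₁*g+γ₁) := by positivity
    rw [abs_div, abs_of_pos hDen, div_le_iff₀ hDen,
      show (10:ℝ)/τ^5*s*(γ₁*b*(1+g)*(b*g^2+2*γ₁*g+γ₁))
        = 10*(s*(γ₁*b*(1+g)*(b*g^2+2*γ₁*g+γ₁)))/τ^5 by ring,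
      le_div_iff₀ (by positivity : (0:ℝ) < τ^5)]
    -- preparatory product facts
    have hτ2b : τ^2*b ≤ 1 := by nlinarith
    have hτ2γ : τ^2*γ₁ ≤ 1 := by nlinarith
    have hγsq : τ^2*γ₁^2 ≤ 1 := by
      nlinarith [mul_le_mul_of_nonneg_left hτγ₁ (mul_nonneg hτ0.le hγ₁0.le)]
    have t1 : τ^2*b*g^2 ≤ g^2 := by linarith [mul_le_mul_of_nonneg_right hτ2b (sq_nonneg g)]
    have t2 : τ^2*γ₁*g^2 ≤ g^2 := by linarith [mul_le_mul_of_nonneg_right hτ2γ (sq_nonneg g)]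
    have t3 : τ^2*γ₁*g ≤ g := by linarith [mul_le_mul_of_nonneg_right hτ2γ hg0.le]
    have t2' : τ^2*γ₁^2*g^2 ≤ g^2 := by linarith [mul_le_mul_of_nonneg_right hγsq (sq_nonneg g)]
    have t3' : τ^2*γ₁^2*g ≤ g := by linarith [mul_le_mul_of_nonneg_right hγsq hg0.le]
    have t4 : (0:ℝ) ≤ τ^2*γ₁^2*g^2 := by positivity
    have t5 : (0:ℝ) ≤ τ^2*γ₁^2*g := by positivity
    have t6 : (0:ℝ) ≤ τ^2*γ₁^2 := by positivity
    have t7 : (0:ℝ) ≤ τ^2*b*g^2 := by positivity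
    have t8 : (0:ℝ) ≤ τ^2*γ₁*g^2 := by positivity
    have t9 : (0:ℝ) ≤ τ^2*γ₁*g := by positivity
    have t10 : (0:ℝ) ≤ τ^2*γ₁ := by positivity
    have t11 : g ≤ g^2 := by nlinarith
    have t12 : (1:ℝ) ≤ g^2 := by nlinarith
    have hNum1 : τ^2*(2*(b-γ₁^2+γ₁)*g^2 - 3*γ₁*(γ₁-1)*g - γ₁*(γ₁-1)) ≤ 10*g^2 := by
      linarith [t1, t2, t3, t4, t5, t6, t11, t12, hτ2γ]
    have hNum2 : -(10*g^2) ≤ τ^2*(2*(b-γ₁^2+γ₁)*g^2 - 3*γ₁*(γ₁-1)*g - γ₁*(γ₁-1)) := by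
      linarith [t2', t3', t7, t8, t9, t10, t11, t12]
    have hbig : b*g^2*g ≤ γ₁*((b*g^2+2*γ₁*g+γ₁)*(1+g)) := by
      have m1 : b*g^2 ≤ b*g^2+2*γ₁*g+γ₁ := by nlinarith
      have m3 : (b*g^2)*g ≤ (b*g^2+2*γ₁*g+γ₁)*(1+g) :=
        mul_le_mul m1 (by linarith) hg0.le hB.le
      have m4 : (b*g^2+2*γ₁*g+γ₁)*(1+g) ≤ γ₁*((b*g^2+2*γ₁*g+γ₁)*(1+g)) :=
        le_mul_of_one_le_left (by positivity) hγ₁1.le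
      linarith
    have hsDen : τ^3*g^2 ≤ s*(γ₁*b*(1+g)*(b*g^2+2*γ₁*g+γ₁)) := by
      have A1 : s*b*(b*g^2*g) ≤ s*b*(γ₁*((b*g^2+2*γ₁*g+γ₁)*(1+g))) :=
        mul_le_mul_of_nonneg_left hbig (by positivity)
      have A3 : b^2*g^2*b ≤ b^2*g^2*(s*g) :=
        mul_le_mul_of_nonneg_left hsg (by positivity)
      have A4 : τ^3*g^2 ≤ b^2*g^2*b := by
        linarith [mul_le_mul_of_nonneg_right (pow_le_pow_left₀ hτ0.le hbτ' 3) (sq_nonneg g)]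
      linarith [A1, A3, A4]
    rcases abs_cases (2*(b-γ₁^2+γ₁)*g^2 - 3*γ₁*(γ₁-1)*g - γ₁*(γ₁-1)) with ⟨hc, _⟩ | ⟨hc, _⟩ <;>
        rw [hc]
    · have w1 : τ^3*(τ^2*(2*(b-γ₁^2+γ₁)*g^2 - 3*γ₁*(γ₁-1)*g - γ₁*(γ₁-1))) ≤ τ^3*(10*g^2) :=
        mul_le_mul_of_nonneg_left hNum1 (by positivity)
      linarith [w1, hsDen]
    · have w2 : τ^3*(-(10*g^2)) ≤ τ^3*(τ^2*(2*(b-γ₁^2+γ₁)*g^2 - 3*γ₁*(γ₁-1)*g - γ₁*(γ₁-1))) :=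
        mul_le_mul_of_nonneg_left hNum2 (by positivity)
      linarith [w2, hsDen]
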